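/- For any rigid tree grammar G and any term t in the language of G, there exists a derivation of t in G which uses at most one production rule with left-hand side β for each rigid non-terminal β. -/

import Mathlib

/-- Terms (trees) over a ranked alphabet `F` and non-terminals `N`. -/
inductive Tm (F N : Type) : Type
  | func : F → List (Tm F N) → Tm F N
  | nt : N → Tm F N

namespace Tm

variable {F N N' : Type}

/-- The subterm of a term at a position (a list of natural numbers), if it exists. -/
def at? : Tm F N → List Nat → Option (Tm F N)
  | t, [] => some t
  | nt _, _ :: _ => none
  | func _ args, i :: p =>
      match args[i]? with
      | some a => a.at? p
      | none => none
  termination_by t p => p.length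

/-- The non-terminal `β` occurs at position `p` in a term. -/
inductive OccursAt (β : N) : Tm F N → List Nat → Prop
  | here : OccursAt β (nt β) []
  | there {f : F} {args : List (Tm F N)} {i : Nat} {a : Tm F N} {p : List Nat} :
      args[i]? = some a → OccursAt β a p → OccursAt β (func f args) (i :: p)

/-- The non-terminal `β` occurs in the term `t`. -/
def Occurs (β : N) (t : Tm F N) : Prop := ∃ p, OccursAt β t p

/-- A term is ground if it contains no non-terminals. -/
inductive IsGround : Tm F N → Prop
  | func {f : F} {args : List (Tm F N)} : (∀ a ∈ args, IsGround a) → IsGround (func f args)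

/-- Substitution of the term `s` for the non-terminal `β`. -/
def subst [DecidableEq N] (β : N) (s : Tm F N) : Tm F N → Tm F N
  | nt γ => if γ = β then s else nt γ
  | func f args => func f (args.attach.map fun a => subst β s a.1)
  decreasing_by all_goals (simp only [Tm.func.sizeOf_spec]; have := List.sizeOf_lt_of_mem a.2; omega)

/-- Renaming of non-terminals. -/
def mapNT (σ : N → N') : Tm F N → Tm F N'
  | nt γ => nt (σ γ)
  | func f args => func f (args.attach.map fun a => mapNT σ a.1)
  decreasing_by all_goals (simp only [Tm.func.sizeOf_spec]; have := List.sizeOf_lt_of_mem a.2; omega)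

/-- The size (number of symbol occurrences) of a term. -/
def size : Tm F N → Nat
  | nt _ => 1
  | func _ args => 1 + (args.attach.map fun a => size a.1).sum
  decreasing_by all_goals (simp only [Tm.func.sizeOf_spec]; have := List.sizeOf_lt_of_mem a.2; omega)

end Tm

/-- One rewrite step using the single production `pr`: replace one occurrence of the
    left-hand side non-terminal by the right-hand side. -/
inductive ProdStep {F N : Type} : (N × Tm F N) → Tm F N → Tm F N → Prop
  | here {β : N} {t : Tm F N} : ProdStep (β, t) (Tm.nt β) t
  | inArg {pr : N × Tm F N} {f : F} {args : List (Tm F N)} {i : Nat} {a b : Tm F N} :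
      args[i]? = some a → ProdStep pr a b → ProdStep pr (Tm.func f args) (Tm.func f (args.set i b))

/-- A rigid tree grammar: a set of rigid non-terminals, a start symbol and a set of
    productions.  (Taking `rigid = ∅` gives a plain regular tree grammar;
    `rigid = Set.univ` a totally rigid one.) -/
structure RTG (F N : Type) where
  rigid : Set N
  start : N
  prods : Set (N × Tm F N)

/-- A derivation of the term `t` in the grammar `G`: a sequence of terms starting with the
    start symbol and ending with `t`, each step rewriting by a production of `G`
    (the list `prs` records which production is used at each step). -/
structure Deriv {F N : Type} (G : RTG F N) (t : Tm F N) where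
  prs : List (N × Tm F N)
  seq : List (Tm F N)
  len : seq.length = prs.length + 1
  head : seq.head? = some (Tm.nt G.start)
  last : seq.getLast? = some t
  mem : ∀ pr ∈ prs, pr ∈ G.prods
  steps : ∀ (i : Nat) (a b : Tm F N) (pr : N × Tm F N),
      seq[i]? = some a → seq[i + 1]? = some b → prs[i]? = some pr → ProdStep pr a b

namespace Deriv

variable {F N : Type} {G : RTG F N} {t : Tm F N}

/-- `p` is a `β`-position of the derivation `D`. -/
def IsPos (D : Deriv G t) (β : N) (p : List Nat) : Prop :=
  ∃ s ∈ D.seq, Tm.OccursAt β s p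

/-- The rigidity condition: all positions at which a rigid non-terminal occurs during the
    derivation carry equal subterms of the final term. -/
def Rigid (D : Deriv G t) : Prop :=
  ∀ β ∈ G.rigid, ∀ p q, D.IsPos β p → D.IsPos β q → t.at? p = t.at? q

end Deriv

/-- The language of a rigid tree grammar: ground terms derivable from the start symbol by a
    derivation satisfying the rigidity condition. -/
def RTG.Lang {F N : Type} (G : RTG F N) : Set (Tm F N) :=
  { t | t.IsGround ∧ ∃ D : Deriv G t, D.Rigid }

/-- The language of the underlying regular tree grammar (no rigidity condition). -/
def RTG.RegLang {F N : Type} (G : RTG F N) : Set (Tm F N) :=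
  { t | t.IsGround ∧ Nonempty (Deriv G t) }

/-- One-step reachability between non-terminals: `α →_P β` iff some production `α → t` in `P`
    has `β` occurring in `t`. -/
def Reach {F N : Type} (P : Set (N × Tm F N)) (α β : N) : Prop :=
  ∃ t, (α, t) ∈ P ∧ Tm.Occurs β t

/-- A set of productions is acyclic if the transitive closure of `→_P` is irreflexive. -/
def Acyclic {F N : Type} (P : Set (N × Tm F N)) : Prop :=
  ∀ α, ¬ Relation.TransGen (Reach P) α α


section RigidProof
set_option autoImplicit false

variable {F N : Type}

lemma List.set_self' {α : Type _} (l : List α) (i : Nat) (hi : i < l.length) :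
    l.set i l[i] = l := by
  apply List.ext_getElem (by simp)
  intro j h1 h2
  rcases eq_or_ne i j with h | h
  · subst h; simp
  · simp [List.getElem_set_ne h]

lemma isGround_no_occ {γ : N} {a : Tm F N} {p : List Nat}
    (hg : a.IsGround) (h : Tm.OccursAt γ a p) : False := by
  induction h with
  | here => cases hg
  | @there f args i a p hget _ ih =>
      cases hg with
      | func hargs =>
          obtain ⟨hi, rfl⟩ := List.getElem?_eq_some_iff.mp hget
          exact ih (hargs _ (List.getElem_mem hi))

lemma at?_nil (t : Tm F N) : t.at? [] = some t := by
  cases t <;> simp [Tm.at?]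

lemma at?_cons {f : F} {args : List (Tm F N)} {i : Nat} {a : Tm F N} {p : List Nat}
    (h : args[i]? = some a) : (Tm.func f args).at? (i :: p) = a.at? p := by
  rw [Tm.at?, h]

/-- A generation tree: a structured derivation from `s` to `u`. -/
inductive GenT (G : RTG F N) : Tm F N → Tm F N → Type where
  | nt {β : N} {s u : Tm F N} (h : (β, s) ∈ G.prods) (d : GenT G s u) : GenT G (Tm.nt β) u
  | func {f : F} {args us : List (Tm F N)} (hl : args.length = us.length)
      (ds : (i : Fin args.length) → GenT G args[i.1] (us[i.1]'(lt_of_lt_of_eq i.2 hl))) :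
      GenT G (Tm.func f args) (Tm.func f us)

namespace GenT

variable {G : RTG F N}

/-- The height/size measure of a generation tree. -/
def ht : {s u : Tm F N} → GenT G s u → Nat
  | _, _, nt _ d => d.ht + 1
  | _, _, func (args := args) _ ds => 1 + ∑ i : Fin args.length, ((ds i).ht + 1)

lemma ht_nt {β : N} {s u : Tm F N} (h : (β, s) ∈ G.prods) (d : GenT G s u) :
    (GenT.nt h d).ht = d.ht + 1 := rfl

lemma ht_func_lt {f : F} {args us : List (Tm F N)} (hl : args.length = us.length)
    (ds : (i : Fin args.length) → GenT G args[i.1] (us[i.1]'(lt_of_lt_of_eq i.2 hl)))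
    (i : Fin args.length) : (ds i).ht < (GenT.func (f := f) hl ds).ht := by
  have h1 : (ds i).ht + 1 ≤ ∑ j : Fin args.length, ((ds j).ht + 1) :=
    Finset.single_le_sum (f := fun j => (ds j).ht + 1) (fun _ _ => Nat.zero_le _)
      (Finset.mem_univ i)
  show (ds i).ht < 1 + ∑ j : Fin args.length, ((ds j).ht + 1)
  omega

/-- `NodeAt d γ p r v` : in the generation tree `d` there is a node at position `p`
    rewriting the non-terminal `γ` by the production `(γ, r)`, generating `v`. -/
inductive NodeAt : {s u : Tm F N} → GenT G s u → N → List Nat → Tm F N → Tm F N → Prop where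
  | here {β : N} {s u : Tm F N} (h : (β, s) ∈ G.prods) (d : GenT G s u) :
      NodeAt (GenT.nt h d) β [] s u
  | inNt {β : N} {s u : Tm F N} (h : (β, s) ∈ G.prods) (d : GenT G s u)
      {γ : N} {p : List Nat} {r v : Tm F N} :
      NodeAt d γ p r v → NodeAt (GenT.nt h d) γ p r v
  | inFunc {f : F} {args us : List (Tm F N)} (hl : args.length = us.length)
      (ds : (i : Fin args.length) → GenT G args[i.1] (us[i.1]'(lt_of_lt_of_eq i.2 hl)))
      (i : Fin args.length) {γ : N} {p : List Nat} {r v : Tm F N} :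
      NodeAt (ds i) γ p r v → NodeAt (GenT.func (f := f) hl ds) γ (i.1 :: p) r v

lemma nodeAt_at? {s u : Tm F N} {d : GenT G s u} {γ : N} {p : List Nat} {r v : Tm F N}
    (h : NodeAt d γ p r v) : u.at? p = some v := by
  induction h with
  | here => exact at?_nil _
  | inNt _ _ _ ih => exact ih
  | inFunc hl ds i _ ih =>
      rw [at?_cons (List.getElem?_eq_getElem (lt_of_lt_of_eq i.2 hl))]
      exact ih

lemma occurs_node {γ : N} {s : Tm F N} {p : List Nat} (h : Tm.OccursAt γ s p) :
    ∀ {u : Tm F N} (d : GenT G s u), ∃ r v, NodeAt d γ p r v := by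
  induction h with
  | here =>
      intro u d
      cases d with
      | nt hm d' => exact ⟨_, _, NodeAt.here hm d'⟩
  | @there f args i a p hget hocc ih =>
      intro u d
      cases d with
      | func hl ds =>
          obtain ⟨hi, ha⟩ := List.getElem?_eq_some_iff.mp hget
          subst ha
          obtain ⟨r, v, hn⟩ := ih (ds ⟨i, hi⟩)
          exact ⟨r, v, NodeAt.inFunc (f := f) hl ds ⟨i, hi⟩ hn⟩

/-- cast the source of a generation tree -/
def castSrc {s s' u : Tm F N} (h : s = s') (d : GenT G s u) : GenT G s' u := h ▸ d

lemma nodeAt_castSrc {s s' u : Tm F N} (h : s = s') (d : GenT G s u)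
    {γ : N} {p : List Nat} {r v : Tm F N} :
    NodeAt (castSrc h d) γ p r v ↔ NodeAt d γ p r v := by
  subst h; rfl

def castG {s s' u u' : Tm F N} (hs : s = s') (hu : u = u') (d : GenT G s u) :
    GenT G s' u' := hs ▸ hu ▸ d

lemma nodeAt_castG {s s' u u' : Tm F N} (hs : s = s') (hu : u = u') (d : GenT G s u)
    {γ : N} {p : List Nat} {r v : Tm F N} :
    NodeAt (castG hs hu d) γ p r v ↔ NodeAt d γ p r v := by
  subst hs; subst hu; rfl

end GenT

lemma getElem_idx {α : Type _} {l : List α} {i j : Nat} (hi : i < l.length) (h : i = j) :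
    l[i]'hi = l[j]'(h ▸ hi) := by subst h; rfl

open GenT

/-- Sequential derivations as an inductive type. -/
inductive Der (G : RTG F N) : Tm F N → Tm F N → Type where
  | refl (s : Tm F N) : Der G s s
  | cons {a b c : Tm F N} (pr : N × Tm F N) (h : pr ∈ G.prods) (st : ProdStep pr a b)
      (d : Der G b c) : Der G a c

namespace Der

variable {G : RTG F N}

def terms : {a c : Tm F N} → Der G a c → List (Tm F N)
  | _, _, refl s => [s]
  | _, _, cons (a := a) _ _ _ d => a :: d.terms

def prsList : {a c : Tm F N} → Der G a c → List (N × Tm F N)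
  | _, _, refl _ => []
  | _, _, cons pr _ _ d => pr :: d.prsList

lemma terms_cons_shape {a c : Tm F N} (d : Der G a c) : ∃ l, d.terms = a :: l := by
  cases d <;> exact ⟨_, rfl⟩

lemma head?_terms {a c : Tm F N} (d : Der G a c) : d.terms.head? = some a := by
  obtain ⟨l, hl⟩ := d.terms_cons_shape; rw [hl]; rfl

lemma mem_head_terms {a c : Tm F N} (d : Der G a c) : a ∈ d.terms := by
  obtain ⟨l, hl⟩ := d.terms_cons_shape; rw [hl]; exact List.mem_cons_self

lemma getLast?_terms {a c : Tm F N} (d : Der G a c) : d.terms.getLast? = some c := by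
  induction d with
  | refl s => rfl
  | @cons a b c pr h st d ih =>
      obtain ⟨l, hl⟩ := d.terms_cons_shape
      show (a :: d.terms).getLast? = some c
      rw [hl] at ih ⊢
      rw [List.getLast?_cons_cons, ih]

lemma length_terms {a c : Tm F N} (d : Der G a c) :
    d.terms.length = d.prsList.length + 1 := by
  induction d with
  | refl s => rfl
  | cons pr h st d ih => show d.terms.length + 1 = _; rw [ih]; rfl

lemma mem_prods {a c : Tm F N} (d : Der G a c) : ∀ pr ∈ d.prsList, pr ∈ G.prods := by
  induction d with
  | refl s => intro pr hpr; simp [prsList] at hpr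
  | cons pr' h st d ih =>
      intro pr hpr
      rcases List.mem_cons.mp hpr with h1 | h1
      · subst h1; exact h
      · exact ih pr h1

lemma steps {a c : Tm F N} (d : Der G a c) :
    ∀ (i : Nat) (x y : Tm F N) (pr : N × Tm F N), d.terms[i]? = some x →
      d.terms[i+1]? = some y → d.prsList[i]? = some pr → ProdStep pr x y := by
  induction d with
  | refl s => intro i x y pr _ _ h3; simp [prsList] at h3
  | @cons a b c pr' h st d ih =>
      intro i x y pr h1 h2 h3
      match i with
      | 0 =>
          have hx : a = x := by simpa [terms] using h1
          have h2' : d.terms[0]? = some y := by simpa [terms] using h2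
          have hb : d.terms[0]? = some b := by
            rw [← List.head?_eq_getElem?]; exact d.head?_terms
          have hy : b = y := by rw [hb] at h2'; exact Option.some.inj h2'
          have hpr : pr' = pr := by simpa [prsList] using h3
          subst hx; subst hy; subst hpr; exact st
      | (i+1) =>
          exact ih i x y pr (by simpa [terms] using h1) (by simpa [terms] using h2)
            (by simpa [prsList] using h3)

def trans : {a b c : Tm F N} → Der G a b → Der G b c → Der G a c
  | _, _, _, refl _, e => e
  | _, _, _, cons pr h st d, e => cons pr h st (d.trans e)

lemma mem_terms_trans {a b c : Tm F N} (d : Der G a b) :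
    ∀ (e : Der G b c) (x : Tm F N), x ∈ (d.trans e).terms → x ∈ d.terms ∨ x ∈ e.terms := by
  induction d with
  | refl s => exact fun e x hx => Or.inr hx
  | cons pr h st d ih =>
      intro e x hx
      rcases List.mem_cons.mp hx with h1 | h1
      · exact Or.inl (by rw [h1]; exact List.mem_cons_self)
      · rcases ih e x h1 with h2 | h2
        · exact Or.inl (List.mem_cons_of_mem _ h2)
        · exact Or.inr h2

lemma prsList_trans {a b c : Tm F N} (d : Der G a b) :
    ∀ (e : Der G b c), (d.trans e).prsList = d.prsList ++ e.prsList := by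
  induction d with
  | refl s => intro e; rfl
  | cons pr h st d ih =>
      intro e
      show pr :: (d.trans e).prsList = _
      rw [ih]; rfl

def castTgt {a c c' : Tm F N} (h : c = c') (d : Der G a c) : Der G a c' := h ▸ d

lemma terms_castTgt {a c c' : Tm F N} (h : c = c') (d : Der G a c) :
    (castTgt h d).terms = d.terms := by subst h; rfl

lemma prsList_castTgt {a c c' : Tm F N} (h : c = c') (d : Der G a c) :
    (castTgt h d).prsList = d.prsList := by subst h; rfl

end Der

end RigidProof
section Layer2

variable {F N : Type} {G : RTG F N}

open GenT

lemma exists_genT_step {pr : N × Tm F N} (hpr : pr ∈ G.prods) :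
    ∀ {a b : Tm F N}, ProdStep pr a b → ∀ {u : Tm F N} (d : GenT G b u),
    ∃ d' : GenT G a u, ∀ γ p r v, NodeAt d' γ p r v →
      Tm.OccursAt γ a p ∨ NodeAt d γ p r v := by
  intro a b st
  induction st with
  | @here β t0 =>
      intro u d
      refine ⟨GenT.nt hpr d, ?_⟩
      intro γ p r v hn
      cases hn with
      | here => exact Or.inl Tm.OccursAt.here
      | inNt _ _ hn' => exact Or.inr hn'
  | @inArg pr f args i a0 b0 hget st ih =>
      intro u d
      cases d with
      | @func _ _ us hl ds =>
          obtain ⟨hi, ha⟩ := List.getElem?_eq_some_iff.mp hget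
          have hlen : args.length = us.length := by simpa using hl
          have hib : i < (args.set i b0).length := by simpa using hi
          have hbi : (args.set i b0)[i]'hib = b0 := List.getElem_set_self _
          obtain ⟨di', hdi'⟩ := ih hpr (castSrc hbi (ds ⟨i, hib⟩))
          have hiu : i < us.length := lt_of_lt_of_eq hi hlen
          let ds' : (j : Fin args.length) → GenT G args[j.1]
              (us[j.1]'(lt_of_lt_of_eq j.2 hlen)) := fun j =>
            if hj : j.1 = i then
              castG (ha.symm.trans (getElem_idx hi hj.symm)) (getElem_idx hiu hj.symm) di'
            else
              castSrc (List.getElem_set_ne (fun hh => hj hh.symm) _)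
                (ds ⟨j.1, by simpa using j.2⟩)
          refine ⟨GenT.func (f := f) hlen ds', ?_⟩
          intro γ p r v hn
          cases hn with
          | inFunc _ _ j hn' =>
              by_cases hj : j.1 = i
              · have hn'' := (nodeAt_castG _ _ _).mp
                  (by simpa only [ds', dif_pos hj] using hn')
                rcases hdi' γ _ r v hn'' with h1 | h1
                · refine Or.inl ?_
                  rw [hj]
                  exact Tm.OccursAt.there hget h1
                · refine Or.inr ?_
                  have h2 := (nodeAt_castSrc hbi _).mp h1
                  have h3 := NodeAt.inFunc (f := f) hl ds ⟨i, hib⟩ h2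
                  rw [hj]
                  exact h3
              · have hn'' := (nodeAt_castSrc _ _).mp
                  (by simpa only [ds', dif_neg hj] using hn')
                exact Or.inr (NodeAt.inFunc (f := f) hl ds ⟨j.1, by simpa using j.2⟩ hn'')

lemma exists_genT_ground : ∀ {u : Tm F N}, u.IsGround →
    ∃ d : GenT G u u, ∀ γ p r v, ¬ NodeAt d γ p r v := by
  intro u hg
  induction hg with
  | @func f args hargs ih =>
      choose ch hch using ih
      refine ⟨GenT.func (f := f) rfl (fun i => ch _ (List.getElem_mem i.2)), ?_⟩
      intro γ p r v hn
      cases hn with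
      | inFunc _ _ i hn' => exact hch _ _ γ _ r v hn'

lemma exists_genT_of_der : ∀ {s u : Tm F N} (der : Der G s u), u.IsGround →
    ∃ d : GenT G s u, ∀ γ p r v, NodeAt d γ p r v →
      ∃ x ∈ der.terms, Tm.OccursAt γ x p := by
  intro s u der hg
  induction der with
  | refl s =>
      obtain ⟨d, hd⟩ := exists_genT_ground hg
      exact ⟨d, fun γ p r v hn => absurd hn (hd γ p r v)⟩
  | @cons a b c pr h st d ih =>
      obtain ⟨d1, hd1⟩ := ih hg
      obtain ⟨d0, hd0⟩ := exists_genT_step h st d1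
      refine ⟨d0, fun γ p r v hn => ?_⟩
      rcases hd0 γ p r v hn with hocc | hn'
      · exact ⟨a, Der.mem_head_terms _, hocc⟩
      · obtain ⟨x, hx, ho⟩ := hd1 γ p r v hn'
        exact ⟨x, List.mem_cons_of_mem _ hx, ho⟩

end Layer2
section Layer3

variable {F N : Type} {G : RTG F N}

open GenT

lemma exists_lift {a c : Tm F N} (d : Der G a c) :
    ∀ (f : F) (L : List (Tm F N)) (i : Nat), L[i]? = some a →
    ∃ e : Der G (Tm.func f L) (Tm.func f (L.set i c)),
      (∀ x ∈ e.terms, ∃ y ∈ d.terms, x = Tm.func f (L.set i y)) ∧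
      e.prsList = d.prsList := by
  induction d with
  | refl s =>
      intro f L i hget
      obtain ⟨hi, hEq⟩ := List.getElem?_eq_some_iff.mp hget
      have hset : L.set i s = L := by rw [← hEq]; exact List.set_self' L i hi
      rw [hset]
      refine ⟨Der.refl _, ?_, rfl⟩
      intro x hx
      rcases List.mem_cons.mp hx with h1 | h1
      · exact ⟨s, List.mem_cons_self, by rw [h1, hset]⟩
      · simp at h1
  | @cons a b c pr h st d ih =>
      intro f L i hget
      obtain ⟨hi, hEq⟩ := List.getElem?_eq_some_iff.mp hget
      have hstep : ProdStep pr (Tm.func f L) (Tm.func f (L.set i b)) :=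
        ProdStep.inArg hget st
      have hib : i < (L.set i b).length := by simpa using hi
      obtain ⟨e', he1, he2⟩ := ih f (L.set i b) i
        (by rw [List.getElem?_eq_getElem hib, List.getElem_set_self])
      have hcc : (L.set i b).set i c = L.set i c := List.set_set _
      refine ⟨Der.cons pr h hstep (Der.castTgt (congrArg (Tm.func f) hcc) e'), ?_, ?_⟩
      · intro x hx
        rcases List.mem_cons.mp hx with h1 | h1
        · refine ⟨a, Der.mem_head_terms _, ?_⟩
          rw [h1, ← hEq, List.set_self' L i hi]
        · rw [Der.terms_castTgt] at h1
          obtain ⟨y, hy, hxy⟩ := he1 x h1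
          exact ⟨y, List.mem_cons_of_mem _ hy, by rw [hxy, List.set_set]⟩
      · show pr :: (Der.castTgt _ e').prsList = _
        rw [Der.prsList_castTgt, he2]
        rfl

lemma exists_der_of_genT :
    ∀ (n : Nat) {s u : Tm F N} (d : GenT G s u), d.ht < n → u.IsGround →
    ∃ der : Der G s u,
      (∀ x ∈ der.terms, ∀ γ p, Tm.OccursAt γ x p → ∃ r v, NodeAt d γ p r v) ∧
      (∀ pr ∈ der.prsList, ∃ p v, NodeAt d pr.1 p pr.2 v) := by
  intro n
  induction n with
  | zero => intro s u d h; omega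
  | succ n IH =>
      intro s u d hht hg
      cases d with
      | @nt β s0 u h d' =>
          obtain ⟨der', h1, h2⟩ := IH d' (by rw [ht_nt] at hht; omega) hg
          refine ⟨Der.cons (β, s0) h ProdStep.here der', ?_, ?_⟩
          · intro x hx γ p hocc
            rcases List.mem_cons.mp hx with h3 | h3
            · subst h3
              cases hocc with
              | here => exact ⟨s0, u, NodeAt.here h d'⟩
            · obtain ⟨r, v, hn⟩ := h1 x h3 γ p hocc
              exact ⟨r, v, NodeAt.inNt h d' hn⟩
          · intro pr hpr
            rcases List.mem_cons.mp hpr with h3 | h3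
            · subst h3; exact ⟨[], u, NodeAt.here h d'⟩
            · obtain ⟨p, v, hn⟩ := h2 pr h3
              exact ⟨p, v, NodeAt.inNt h d' hn⟩
      | @func f args us hl ds =>
          have hgs : ∀ (j : Nat) (hj : j < us.length), (us[j]'hj).IsGround := by
            cases hg with
            | func h' => exact fun j hj => h' _ (List.getElem_mem hj)
          have key : ∀ (j k : Nat), k + j = args.length →
              ∃ der : Der G (Tm.func f (us.take k ++ args.drop k)) (Tm.func f us),
                (∀ x ∈ der.terms, ∀ γ p, Tm.OccursAt γ x p →
                  ∃ r v, NodeAt (GenT.func (f := f) hl ds) γ p r v) ∧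
                (∀ pr ∈ der.prsList,
                  ∃ p v, NodeAt (GenT.func (f := f) hl ds) pr.1 p pr.2 v) := by
            intro j
            induction j with
            | zero =>
                intro k hk
                have hkus : k = us.length := by omega
                have heq : us.take k ++ args.drop k = us := by
                  rw [hkus, List.take_length, List.drop_of_length_le (by omega),
                    List.append_nil]
                rw [heq]
                refine ⟨Der.refl _, ?_, ?_⟩
                · intro x hx γ p hocc
                  rcases List.mem_cons.mp hx with h3 | h3
                  · subst h3; exact absurd hocc (fun hh => isGround_no_occ hg hh)
                  · simp at h3
                · intro pr hpr; simp [Der.prsList] at hpr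
            | succ j IHj =>
                intro k hk
                have hkl : k < args.length := by omega
                have hku : k < us.length := by omega
                have htk : (us.take k).length = k := by
                  rw [List.length_take]; omega
                obtain ⟨derk, hk1, hk2⟩ := IH (ds ⟨k, hkl⟩)
                  (by have := ht_func_lt (f := f) hl ds ⟨k, hkl⟩; omega) (hgs k hku)
                have hLk : (us.take k ++ args.drop k)[k]? = some (args[k]'hkl) := by
                  rw [List.getElem?_append_right htk.le, htk, Nat.sub_self,
                    List.getElem?_drop, Nat.add_zero, List.getElem?_eq_getElem hkl]
                obtain ⟨e1, he1, he2⟩ := exists_lift derk f (us.take k ++ args.drop k) k hLk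
                have hstep : (us.take k ++ args.drop k).set k (us[k]'hku) =
                    us.take (k+1) ++ args.drop (k+1) := by
                  rw [List.set_append_right _ _ htk.le, htk, Nat.sub_self]
                  rw [List.drop_eq_getElem_cons hkl, List.set_cons_zero]
                  rw [show us.take (k+1) = us.take k ++ [us[k]'hku] by
                    rw [List.take_succ, List.getElem?_eq_getElem hku]; rfl]
                  rw [List.append_assoc]
                  rfl
                obtain ⟨e2, hx2, hp2⟩ := IHj (k+1) (by omega)
                refine ⟨(Der.castTgt (congrArg (Tm.func f) hstep) e1).trans e2, ?_, ?_⟩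
                · intro x hx γ p hocc
                  rcases Der.mem_terms_trans _ _ x hx with h3 | h3
                  · rw [Der.terms_castTgt] at h3
                    obtain ⟨y, hy, hxy⟩ := he1 x h3
                    subst hxy
                    cases hocc with
                    | @there _ _ iocc aocc pocc hgetocc hoccsub =>
                        have hiobnd : iocc < (us.take k ++ args.drop k).length := by
                          have := (List.getElem?_eq_some_iff.mp hgetocc).1
                          simpa using this
                        have hiargs : iocc < args.length := by
                          have hlenL : (us.take k ++ args.drop k).length = args.length := by
                            rw [List.length_append, htk, List.length_drop]; omega
                          omega
                        by_cases hik : iocc = k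
                        · subst hik
                          have ha : aocc = y := by
                            rw [List.getElem?_eq_getElem (by simpa using hiobnd),
                              List.getElem_set_self] at hgetocc
                            exact (Option.some.inj hgetocc).symm
                          rw [ha] at hoccsub
                          obtain ⟨r, v, hn⟩ := hk1 y hy γ pocc hoccsub
                          exact ⟨r, v, NodeAt.inFunc (f := f) hl ds ⟨iocc, hkl⟩ hn⟩
                        · rw [List.getElem?_set_ne (fun hh => hik hh.symm)] at hgetocc
                          by_cases hlt : iocc < k
                          · exfalso
                            rw [List.getElem?_append_left (by omega),
                              List.getElem?_take_of_lt hlt,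
                              List.getElem?_eq_getElem (by omega : iocc < us.length)]
                              at hgetocc
                            have := Option.some.inj hgetocc
                            subst this
                            exact isGround_no_occ (hgs iocc (by omega)) hoccsub
                          · rw [List.getElem?_append_right (by omega : (us.take k).length ≤ iocc),
                              htk, List.getElem?_drop,
                              (by omega : k + (iocc - k) = iocc),
                              List.getElem?_eq_getElem hiargs] at hgetocc
                            have := Option.some.inj hgetocc
                            subst this
                            obtain ⟨r, v, hn⟩ := occurs_node hoccsub (ds ⟨iocc, hiargs⟩)
                            exact ⟨r, v, NodeAt.inFunc (f := f) hl ds ⟨iocc, hiargs⟩ hn⟩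
                  · exact hx2 x h3 γ p hocc
                · intro pr hpr
                  rw [Der.prsList_trans, List.mem_append, Der.prsList_castTgt, he2] at hpr
                  rcases hpr with h3 | h3
                  · obtain ⟨p, v, hn⟩ := hk2 pr h3
                    exact ⟨_, v, NodeAt.inFunc (f := f) hl ds ⟨k, hkl⟩ hn⟩
                  · exact hp2 pr h3
          have := key args.length 0 (by omega)
          rw [List.take_zero, List.drop_zero, List.nil_append] at this
          exact this

end Layer3
section Layer4

variable {F N : Type} {G : RTG F N}

open GenT

lemma exists_der_of_seq :
    ∀ (prs : List (N × Tm F N)) (seq : List (Tm F N)) (a c : Tm F N),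
      seq.length = prs.length + 1 → seq.head? = some a → seq.getLast? = some c →
      (∀ pr ∈ prs, pr ∈ G.prods) →
      (∀ (i : Nat) (x y : Tm F N) (pr : N × Tm F N), seq[i]? = some x →
        seq[i+1]? = some y → prs[i]? = some pr → ProdStep pr x y) →
      ∃ der : Der G a c, ∀ x ∈ der.terms, x ∈ seq := by
  intro prs
  induction prs with
  | nil =>
      intro seq a c hlen hhead hlast _ _
      match seq, hlen with
      | [x], _ =>
          have h1 : x = a := by simpa using hhead
          have h2 : x = c := by simpa using hlast
          subst h1; subst h2
          refine ⟨Der.refl x, ?_⟩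
          intro z hz
          have hzx : z = x := by simpa [Der.terms] using hz
          simp [hzx]
  | cons pr prs ih =>
      intro seq a c hlen hhead hlast hmem hsteps
      match seq, hlen with
      | x :: y :: rest, hlen =>
          have hax : x = a := by simpa using hhead
          have hst : ProdStep pr x y := hsteps 0 x y pr (by simp) (by simp) (by simp)
          obtain ⟨der', hder'⟩ := ih (y :: rest) y c (by simpa using hlen) rfl
            (by simpa using hlast) (fun q hq => hmem q (List.mem_cons_of_mem _ hq))
            (fun i x' y' pr' h1 h2 h3 => hsteps (i+1) x' y' pr' (by simpa using h1) (by simpa using h2) (by simpa using h3))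
          subst hax
          refine ⟨Der.cons pr (hmem pr (List.mem_cons_self)) hst der', ?_⟩
          intro z hz
          rcases List.mem_cons.mp hz with h1 | h1
          · exact h1 ▸ List.mem_cons_self
          · exact List.mem_cons_of_mem _ (hder' z h1)

/-- `d` is `U`-good: every rigid node generates the designated subterm. -/
def GoodT (U : N → Tm F N) {s u : Tm F N} (d : GenT G s u) : Prop :=
  ∀ γ p r v, γ ∈ G.rigid → NodeAt d γ p r v → v = U γ

lemma norm_genT (U R : N → Tm F N)
    (hcanon : ∀ β : N, ∀ e : GenT G (Tm.nt β) (U β), GoodT U e →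
      ∃ (h : (β, R β) ∈ G.prods) (e' : GenT G (R β) (U β)), GoodT U (GenT.nt h e') ∧
        ∀ e₂ : GenT G (Tm.nt β) (U β), GoodT U e₂ → e'.ht < e₂.ht) :
    ∀ (n : Nat) {s u : Tm F N} (d : GenT G s u), d.ht < n → GoodT U d →
    ∃ d' : GenT G s u, GoodT U d' ∧
      ∀ γ p r v, γ ∈ G.rigid → NodeAt d' γ p r v → r = R γ := by
  intro n
  induction n with
  | zero => intro s u d h; omega
  | succ n IH =>
      intro s u d hht hgood
      cases d with
      | @nt β s0 u h d' =>
          by_cases hβ : β ∈ G.rigid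
          · have huU : u = U β := hgood β [] s0 u hβ (NodeAt.here h d')
            subst huU
            obtain ⟨hm, e', hge', hmin⟩ := hcanon β (GenT.nt h d') hgood
            have hlt : e'.ht < n := by
              have h1 := hmin (GenT.nt h d') hgood
              rw [ht_nt] at h1 hht
              omega
            obtain ⟨e'', hg'', hr''⟩ := IH e' hlt
              (fun γ p r v hγ hn => hge' γ p r v hγ (NodeAt.inNt hm e' hn))
            refine ⟨GenT.nt hm e'', ?_, ?_⟩
            · intro γ p r v hγ hn
              cases hn with
              | here => rfl
              | inNt _ _ hn' => exact hg'' γ _ _ _ hγ hn'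
            · intro γ p r v hγ hn
              cases hn with
              | here => rfl
              | inNt _ _ hn' => exact hr'' γ _ _ _ hγ hn'
          · obtain ⟨d'', hg'', hr''⟩ := IH d' (by rw [ht_nt] at hht; omega)
              (fun γ p r v hγ hn => hgood γ p r v hγ (NodeAt.inNt h d' hn))
            refine ⟨GenT.nt h d'', ?_, ?_⟩
            · intro γ p r v hγ hn
              cases hn with
              | here => exact absurd hγ hβ
              | inNt _ _ hn' => exact hg'' γ _ _ _ hγ hn'
            · intro γ p r v hγ hn
              cases hn with
              | here => exact absurd hγ hβ
              | inNt _ _ hn' => exact hr'' γ _ _ _ hγ hn'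
      | @func f args us hl ds =>
          have hch : ∀ i : Fin args.length,
              ∃ c : GenT G args[i.1] (us[i.1]'(lt_of_lt_of_eq i.2 hl)),
                GoodT U c ∧ ∀ γ p r v, γ ∈ G.rigid → NodeAt c γ p r v → r = R γ :=
            fun i => IH (ds i) (by have := ht_func_lt (f := f) hl ds i; omega)
              (fun γ p r v hγ hn => hgood γ _ _ _ hγ (NodeAt.inFunc (f := f) hl ds i hn))
          choose ds' h1 h2 using hch
          refine ⟨GenT.func (f := f) hl ds', ?_, ?_⟩
          · intro γ p r v hγ hn
            cases hn with
            | inFunc _ _ i hn' => exact h1 i γ _ _ _ hγ hn'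
          · intro γ p r v hγ hn
            cases hn with
            | inFunc _ _ i hn' => exact h2 i γ _ _ _ hγ hn'

end Layer4
section MainProof

variable {F N : Type}

open GenT

theorem rigid_derivation_unique_productions' (G : RTG F N) (t : Tm F N)
    (ht : t ∈ G.Lang) :
    ∃ D : Deriv G t, D.Rigid ∧
      ∀ β ∈ G.rigid, ∀ s₁ s₂ : Tm F N, (β, s₁) ∈ D.prs → (β, s₂) ∈ D.prs → s₁ = s₂ := by
  obtain ⟨hg, D, hD⟩ := ht
  obtain ⟨der0, hder0⟩ := exists_der_of_seq D.prs D.seq (Tm.nt G.start) t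
    D.len D.head D.last D.mem D.steps
  obtain ⟨d0, hd0⟩ := exists_genT_of_der der0 hg
  have hU : ∀ β : N, ∃ uβ : Tm F N, ∀ p r v, β ∈ G.rigid → NodeAt d0 β p r v → v = uβ := by
    intro β
    by_cases hex : ∃ p r v, NodeAt d0 β p r v
    · obtain ⟨p0, r0, v0, h0⟩ := hex
      refine ⟨v0, fun p r v hβ hn => ?_⟩
      obtain ⟨x, hx, hocc⟩ := hd0 β p r v hn
      obtain ⟨x0, hx0, hocc0⟩ := hd0 β p0 r0 v0 h0
      have hpos : D.IsPos β p := ⟨x, hder0 x hx, hocc⟩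
      have hpos0 : D.IsPos β p0 := ⟨x0, hder0 x0 hx0, hocc0⟩
      have heq := hD β hβ p p0 hpos hpos0
      rw [nodeAt_at? hn, nodeAt_at? h0] at heq
      exact Option.some.inj heq
    · exact ⟨t, fun p r v _ hn => absurd ⟨p, r, v, hn⟩ hex⟩
  choose U hU using hU
  have hgood0 : GoodT U d0 := fun γ p r v hγ hn => hU γ p r v hγ hn
  have hR : ∀ β : N, ∃ rβ : Tm F N, ∀ e : GenT G (Tm.nt β) (U β), GoodT U e →
      ∃ (h : (β, rβ) ∈ G.prods) (e' : GenT G rβ (U β)), GoodT U (GenT.nt h e') ∧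
        ∀ e₂ : GenT G (Tm.nt β) (U β), GoodT U e₂ → e'.ht < e₂.ht := by
    intro β
    by_cases hne : ∃ e : GenT G (Tm.nt β) (U β), GoodT U e
    · have hS : {m : Nat | ∃ e : GenT G (Tm.nt β) (U β), GoodT U e ∧ e.ht = m}.Nonempty := by
        obtain ⟨e, he⟩ := hne
        exact ⟨e.ht, e, he, rfl⟩
      have hmem := Nat.sInf_mem hS
      obtain ⟨e0, hge0, hht0⟩ := hmem
      cases e0 with
      | @nt _ s0 _ hm0 e0' =>
          refine ⟨s0, fun e _ => ⟨hm0, e0', hge0, fun e₂ hg₂ => ?_⟩⟩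
          have hle : sInf {m : Nat | ∃ e : GenT G (Tm.nt β) (U β), GoodT U e ∧ e.ht = m}
              ≤ e₂.ht := Nat.sInf_le ⟨e₂, hg₂, rfl⟩
          rw [ht_nt] at hht0
          omega
    · exact ⟨t, fun e hge => absurd ⟨e, hge⟩ hne⟩
  choose R hR using hR
  obtain ⟨d1, hgood1, hrhs1⟩ := norm_genT U R hR (d0.ht + 1) d0 (by omega) hgood0
  obtain ⟨der1, hterm1, hprs1⟩ := exists_der_of_genT (d1.ht + 1) d1 (by omega) hg
  refine ⟨Deriv.mk der1.prsList der1.terms der1.length_terms der1.head?_terms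
      der1.getLast?_terms der1.mem_prods der1.steps, ?_, ?_⟩
  · intro β hβ p q hp hq
    obtain ⟨x, hx, hocc⟩ := hp
    obtain ⟨y, hy, hocc'⟩ := hq
    obtain ⟨r1, v1, hn1⟩ := hterm1 x hx β p hocc
    obtain ⟨r2, v2, hn2⟩ := hterm1 y hy β q hocc'
    rw [nodeAt_at? hn1, nodeAt_at? hn2,
      hgood1 β p r1 v1 hβ hn1, hgood1 β q r2 v2 hβ hn2]
  · intro β hβ s₁ s₂ h₁ h₂
    obtain ⟨p1, v1, hn1⟩ := hprs1 (β, s₁) h₁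
    obtain ⟨p2, v2, hn2⟩ := hprs1 (β, s₂) h₂
    rw [hrhs1 β p1 s₁ v1 hβ hn1, hrhs1 β p2 s₂ v2 hβ hn2]

end MainProof

/-- every term in the language of a rigid tree grammar has a rigid derivation
    that uses at most one production for each rigid non-terminal. -/
theorem rigid_derivation_unique_productions {F N : Type} (G : RTG F N) (t : Tm F N)
    (ht : t ∈ G.Lang) :
    ∃ D : Deriv G t, D.Rigid ∧
      ∀ β ∈ G.rigid, ∀ s₁ s₂ : Tm F N, (β, s₁) ∈ D.prs → (β, s₂) ∈ D.prs → s₁ = s₂ := by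
  exact rigid_derivation_unique_productions' G t ht
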